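/- Let A be a real symmetric positive definite 2×2 matrix with eigenvalues 0 < λ1 ≤ λ2, let k > 0, and let 0 ≤ L < √(2kλ1)/λ2. For p ∈ ∂Ẽ_{A,k}, let n(p) = Ap/‖Ap‖ denote the outward unit normal to the ellipse at p. Then: (i) for every p ∈ ∂Ẽ_{A,k} and every 0 ≤ s ≤ L, the Euclidean distance from p − s·n(p) to ∂Ẽ_{A,k} equals s; and (ii) the map (p, s) ↦ p − s·n(p) is injective on ∂Ẽ_{A,k} × [0, L]; in particular the inward normal segments of length L based at distinct boundary points are pairwise disjoint. -/

import Mathlib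

open Matrix RealInnerProductSpace

/-!
STATEMENT 11: Let `A` be a real symmetric positive definite 2×2 matrix with eigenvalues
`0 < λ1 ≤ λ2`, `k > 0`, and `0 ≤ L < √(2kλ1)/λ2` (the minimal radius of curvature).
For `p` on the ellipse `∂Ẽ_{A,k} = {x : q_A(x) = k}`, let `n(p) = Ap/‖Ap‖` be the outward
unit normal.  Then (i) for `0 ≤ s ≤ L`, the distance from `p − s·n(p)` to the ellipse
equals `s`; and (ii) the map `(p, s) ↦ p − s·n(p)` is injective on `∂Ẽ_{A,k} × [0, L]`.
-/

/-- The quadratic form `q_A(x) = (1/2)xᵀAx`. -/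
noncomputable def qA (A : Matrix (Fin 2) (Fin 2) ℝ) (x : EuclideanSpace ℝ (Fin 2)) : ℝ :=
  (1 / 2) * ((WithLp.equiv 2 (Fin 2 → ℝ) x) ⬝ᵥ A.mulVec (WithLp.equiv 2 (Fin 2 → ℝ) x))

/-- `A·p`, viewed as a vector in the Euclidean plane. -/
noncomputable def mulPt (A : Matrix (Fin 2) (Fin 2) ℝ) (p : EuclideanSpace ℝ (Fin 2)) :
    EuclideanSpace ℝ (Fin 2) :=
  (WithLp.equiv 2 (Fin 2 → ℝ)).symm (A.mulVec (WithLp.equiv 2 (Fin 2 → ℝ) p))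

lemma inner_mulPt (A : Matrix (Fin 2) (Fin 2) ℝ) (x y : EuclideanSpace ℝ (Fin 2)) :
    ⟪mulPt A x, y⟫ = (A.mulVec (WithLp.equiv 2 (Fin 2 → ℝ) x)) ⬝ᵥ (WithLp.equiv 2 (Fin 2 → ℝ) y) := by
  simp [PiLp.inner_apply, mulPt, dotProduct]
  ring

lemma inner_mulPt_symm (A : Matrix (Fin 2) (Fin 2) ℝ) (hA : A.IsSymm)
    (x y : EuclideanSpace ℝ (Fin 2)) : ⟪mulPt A x, y⟫ = ⟪mulPt A y, x⟫ := by
  rw [inner_mulPt, inner_mulPt]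
  rw [dotProduct_comm, dotProduct_mulVec, ← mulVec_transpose, hA.eq]

lemma mulPt_sub (A : Matrix (Fin 2) (Fin 2) ℝ) (x y : EuclideanSpace ℝ (Fin 2)) :
    mulPt A (x - y) = mulPt A x - mulPt A y := by
  simp [mulPt, mulVec_sub]
  ext i; fin_cases i <;> simp <;> ring

lemma qA_eq_inner (A : Matrix (Fin 2) (Fin 2) ℝ) (x : EuclideanSpace ℝ (Fin 2)) :
    qA A x = (1/2) * ⟪mulPt A x, x⟫ := by
  rw [inner_mulPt, qA, dotProduct_comm]

lemma cayley_vec (A : Matrix (Fin 2) (Fin 2) ℝ) (l1 l2 : ℝ)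
    (htr : A.trace = l1 + l2) (hdet : A.det = l1 * l2) (w : Fin 2 → ℝ) :
    A.mulVec (A.mulVec w) = (l1 + l2) • A.mulVec w - (l1 * l2) • w := by
  rw [trace_fin_two] at htr
  rw [det_fin_two] at hdet
  funext i
  fin_cases i
  · show (A.mulVec (A.mulVec w)) 0 = ((l1 + l2) • A.mulVec w - (l1 * l2) • w) 0
    simp only [mulVec, dotProduct, Fin.sum_univ_two, Pi.sub_apply, Pi.smul_apply, smul_eq_mul]
    linear_combination (A 0 0 * w 0 + A 0 1 * w 1) * htr + w 0 * hdet.symm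
  · show (A.mulVec (A.mulVec w)) 1 = ((l1 + l2) • A.mulVec w - (l1 * l2) • w) 1
    simp only [mulVec, dotProduct, Fin.sum_univ_two, Pi.sub_apply, Pi.smul_apply, smul_eq_mul]
    linear_combination (A 1 0 * w 0 + A 1 1 * w 1) * htr + w 1 * hdet.symm

lemma inner_self_eq_dot (v : EuclideanSpace ℝ (Fin 2)) :
    ⟪v, v⟫ = (WithLp.equiv 2 (Fin 2 → ℝ) v) ⬝ᵥ (WithLp.equiv 2 (Fin 2 → ℝ) v) := by
  simp [PiLp.inner_apply, dotProduct]
  rw [EuclideanSpace.norm_sq_eq]; simp [Fin.sum_univ_two, sq]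

lemma norm_mulPt_sq (A : Matrix (Fin 2) (Fin 2) ℝ) (hA : A.IsSymm) (l1 l2 : ℝ)
    (htr : A.trace = l1 + l2) (hdet : A.det = l1 * l2) (v : EuclideanSpace ℝ (Fin 2)) :
    ‖mulPt A v‖ ^ 2 = (l1 + l2) * ⟪mulPt A v, v⟫ - l1 * l2 * ‖v‖ ^ 2 := by
  have h1 : ⟪mulPt A (mulPt A v), v⟫ = ⟪mulPt A v, mulPt A v⟫ :=
    inner_mulPt_symm A hA (mulPt A v) v
  rw [real_inner_self_eq_norm_sq] at h1
  rw [← h1, inner_mulPt]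
  have h2 : WithLp.equiv 2 (Fin 2 → ℝ) (mulPt A v) = A.mulVec (WithLp.equiv 2 (Fin 2 → ℝ) v) := rfl
  rw [h2, cayley_vec A l1 l2 htr hdet, sub_dotProduct, smul_dotProduct, smul_dotProduct,
    ← inner_mulPt, smul_eq_mul, smul_eq_mul, ← inner_self_eq_dot, real_inner_self_eq_norm_sq]

lemma quad_le (A : Matrix (Fin 2) (Fin 2) ℝ) (hA : A.IsSymm) (l1 l2 : ℝ)
    (hl1 : 0 < l1) (hl12 : l1 ≤ l2)
    (htr : A.trace = l1 + l2) (hdet : A.det = l1 * l2) (v : EuclideanSpace ℝ (Fin 2)) :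
    l1 * ‖v‖ ^ 2 ≤ ⟪mulPt A v, v⟫ ∧ ⟪mulPt A v, v⟫ ≤ l2 * ‖v‖ ^ 2 := by
  rcases eq_or_ne v 0 with rfl | hv
  · simp [mulPt]
  have hn : 0 < ‖v‖ := norm_pos_iff.2 hv
  have hm := norm_mulPt_sq A hA l1 l2 htr hdet v
  have hcs : ⟪mulPt A v, v⟫ ^ 2 ≤ ‖mulPt A v‖ ^ 2 * ‖v‖ ^ 2 := by
    have h := abs_real_inner_le_norm (mulPt A v) v
    have h2 : |⟪mulPt A v, v⟫| ^ 2 ≤ (‖mulPt A v‖ * ‖v‖) ^ 2 := by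
      apply pow_le_pow_left₀ (abs_nonneg _) h
    rw [sq_abs] at h2; nlinarith
  have key : 0 ≤ (⟪mulPt A v, v⟫ - l1 * ‖v‖ ^ 2) * (l2 * ‖v‖ ^ 2 - ⟪mulPt A v, v⟫) := by
    nlinarith
  have hn2 : 0 < ‖v‖ ^ 2 := by positivity
  have hle : l1 * ‖v‖ ^ 2 ≤ l2 * ‖v‖ ^ 2 := by nlinarith
  constructor
  · by_contra h3
    push_neg at h3
    have h4 : l2 * ‖v‖ ^ 2 - ⟪mulPt A v, v⟫ ≤ 0 := by
      by_contra h5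
      push_neg at h5
      nlinarith [mul_pos (show 0 < l1 * ‖v‖ ^ 2 - ⟪mulPt A v, v⟫ by linarith) h5]
    linarith
  · by_contra h3
    push_neg at h3
    have h4 : ⟪mulPt A v, v⟫ - l1 * ‖v‖ ^ 2 ≤ 0 := by
      by_contra h5
      push_neg at h5
      nlinarith [mul_pos h5 (show 0 < ⟪mulPt A v, v⟫ - l2 * ‖v‖ ^ 2 by linarith)]
    linarith

/-- The outward unit normal `n(p) = Ap/‖Ap‖` to the ellipse `{q_A = k}` at `p`. -/
noncomputable def outNormal (A : Matrix (Fin 2) (Fin 2) ℝ) (p : EuclideanSpace ℝ (Fin 2)) :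
    EuclideanSpace ℝ (Fin 2) :=
  ‖mulPt A p‖⁻¹ • mulPt A p

lemma dist_sq_identity (A : Matrix (Fin 2) (Fin 2) ℝ) (hA : A.IsSymm) (k : ℝ)
    (p x : EuclideanSpace ℝ (Fin 2)) (hAp : ‖mulPt A p‖ ≠ 0)
    (hp : qA A p = k) (hx : qA A x = k) (s : ℝ) :
    ‖x - (p - s • outNormal A p)‖ ^ 2
      = ‖x - p‖ ^ 2 - s * ⟪mulPt A (x - p), x - p⟫ / ‖mulPt A p‖ + s ^ 2 := by
  have h1 : x - (p - s • outNormal A p) = (x - p) + s • outNormal A p := by abel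
  have hnorm : ‖outNormal A p‖ = 1 := by
    rw [outNormal, norm_smul, norm_inv, norm_norm, inv_mul_cancel₀ hAp]
  have hq : ⟪mulPt A p, x - p⟫ = -(1/2) * ⟪mulPt A (x - p), x - p⟫ := by
    have hx2 : ⟪mulPt A x, x⟫ = 2 * k := by rw [qA_eq_inner] at hx; linarith
    have hp2 : ⟪mulPt A p, p⟫ = 2 * k := by rw [qA_eq_inner] at hp; linarith
    have hsym : ⟪mulPt A x, p⟫ = ⟪mulPt A p, x⟫ := inner_mulPt_symm A hA x p
    simp only [mulPt_sub, inner_sub_left, inner_sub_right]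
    linarith
  have hinner : ⟪x - p, s • outNormal A p⟫ = s * ⟪mulPt A p, x - p⟫ / ‖mulPt A p‖ := by
    rw [real_inner_smul_right, outNormal, real_inner_smul_right, real_inner_comm]
    field_simp
  rw [h1, norm_add_sq_real, hinner, hq, norm_smul, hnorm, Real.norm_eq_abs, mul_one, sq_abs]
  field_simp
  ring

lemma key_ge (A : Matrix (Fin 2) (Fin 2) ℝ) (hA : A.IsSymm) (l1 l2 : ℝ)
    (hl1 : 0 < l1) (hl12 : l1 ≤ l2)
    (htr : A.trace = l1 + l2) (hdet : A.det = l1 * l2) (k : ℝ)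
    (p x : EuclideanSpace ℝ (Fin 2)) (hp : qA A p = k) (hx : qA A x = k)
    (s : ℝ) (hs : 0 ≤ s) (hsl : s * l2 < ‖mulPt A p‖) :
    s ≤ ‖x - (p - s • outNormal A p)‖ ∧
      (x ≠ p → s < ‖x - (p - s • outNormal A p)‖) := by
  have hl2 : 0 < l2 := lt_of_lt_of_le hl1 hl12
  have hN : 0 < ‖mulPt A p‖ := lt_of_le_of_lt (by positivity) hsl
  have hid := dist_sq_identity A hA k p x hN.ne' hp hx s
  have hQ2 := (quad_le A hA l1 l2 hl1 hl12 htr hdet (x - p)).2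
  have hQ1 := (quad_le A hA l1 l2 hl1 hl12 htr hdet (x - p)).1
  have hdiv : s * ⟪mulPt A (x - p), x - p⟫ / ‖mulPt A p‖ ≤ ‖x - p‖ ^ 2 := by
    rw [div_le_iff₀ hN]
    nlinarith [sq_nonneg ‖x - p‖]
  have hle : s ^ 2 ≤ ‖x - (p - s • outNormal A p)‖ ^ 2 := by
    rw [hid]; linarith
  constructor
  · have h := Real.sqrt_le_sqrt hle
    rwa [Real.sqrt_sq hs, Real.sqrt_sq (norm_nonneg _)] at h
  · intro hne
    have hh : 0 < ‖x - p‖ := by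
      rw [norm_pos_iff, sub_ne_zero]; exact hne
    have hdiv' : s * ⟪mulPt A (x - p), x - p⟫ / ‖mulPt A p‖ < ‖x - p‖ ^ 2 := by
      rw [div_lt_iff₀ hN]
      nlinarith [sq_nonneg ‖x - p‖, mul_pos hh hh]
    have hlt : s ^ 2 < ‖x - (p - s • outNormal A p)‖ ^ 2 := by
      rw [hid]; linarith
    have h := Real.sqrt_lt_sqrt (by positivity) hlt
    rwa [Real.sqrt_sq hs, Real.sqrt_sq (norm_nonneg _)] at h

lemma normAp_ge (A : Matrix (Fin 2) (Fin 2) ℝ) (hA : A.IsSymm) (l1 l2 : ℝ)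
    (hl1 : 0 < l1) (hl12 : l1 ≤ l2)
    (htr : A.trace = l1 + l2) (hdet : A.det = l1 * l2) (k : ℝ) (hk : 0 < k)
    (p : EuclideanSpace ℝ (Fin 2)) (hp : qA A p = k) :
    Real.sqrt (2 * k * l1) ≤ ‖mulPt A p‖ := by
  have hl2 : 0 < l2 := lt_of_lt_of_le hl1 hl12
  have hp2 : ⟪mulPt A p, p⟫ = 2 * k := by rw [qA_eq_inner] at hp; linarith
  have h1 := (quad_le A hA l1 l2 hl1 hl12 htr hdet p).1
  have hm := norm_mulPt_sq A hA l1 l2 htr hdet p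
  have h2 : 2 * k * l1 ≤ ‖mulPt A p‖ ^ 2 := by nlinarith
  have h := Real.sqrt_le_sqrt h2
  rwa [Real.sqrt_sq (norm_nonneg _)] at h

theorem normal_collar_parametrization (A : Matrix (Fin 2) (Fin 2) ℝ)
    (hA : A.IsSymm) (hApd : A.PosDef) (l1 l2 : ℝ)
    (hl1 : 0 < l1) (hl12 : l1 ≤ l2)
    (htr : A.trace = l1 + l2) (hdet : A.det = l1 * l2)
    (k L : ℝ) (hk : 0 < k) (hL : 0 ≤ L) (hLlt : L < Real.sqrt (2 * k * l1) / l2) :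
    (∀ p : EuclideanSpace ℝ (Fin 2), qA A p = k → ∀ s : ℝ, 0 ≤ s → s ≤ L →
        Metric.infDist (p - s • outNormal A p) {x : EuclideanSpace ℝ (Fin 2) | qA A x = k}
          = s) ∧
    (∀ p p' : EuclideanSpace ℝ (Fin 2), qA A p = k → qA A p' = k →
      ∀ s s' : ℝ, s ∈ Set.Icc 0 L → s' ∈ Set.Icc 0 L →
        p - s • outNormal A p = p' - s' • outNormal A p' → p = p' ∧ s = s') := by
  have hl2 : 0 < l2 := lt_of_lt_of_le hl1 hl12
  -- key bound: for p on the ellipse and s ∈ [0, L], s * l2 < ‖A p‖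
  have hbound : ∀ p : EuclideanSpace ℝ (Fin 2), qA A p = k → ∀ s : ℝ, 0 ≤ s → s ≤ L →
      s * l2 < ‖mulPt A p‖ := by
    intro p hp s hs0 hsL
    have h1 := normAp_ge A hA l1 l2 hl1 hl12 htr hdet k hk p hp
    have h2 : L * l2 < Real.sqrt (2 * k * l1) := by
      rw [div_eq_mul_inv] at hLlt
      calc L * l2 < Real.sqrt (2 * k * l1) * l2⁻¹ * l2 := by
            apply mul_lt_mul_of_pos_right hLlt hl2
        _ = Real.sqrt (2 * k * l1) := by field_simp
    have : s * l2 ≤ L * l2 := mul_le_mul_of_nonneg_right hsL hl2.le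
    linarith
  have hdist : ∀ p : EuclideanSpace ℝ (Fin 2), qA A p = k → ∀ s : ℝ, 0 ≤ s → s ≤ L →
      Metric.infDist (p - s • outNormal A p) {x : EuclideanSpace ℝ (Fin 2) | qA A x = k}
        = s := by
    intro p hp s hs0 hsL
    have hsl := hbound p hp s hs0 hsL
    have hN : 0 < ‖mulPt A p‖ := lt_of_le_of_lt (by positivity) hsl
    have hnorm : ‖outNormal A p‖ = 1 := by
      rw [outNormal, norm_smul, norm_inv, norm_norm, inv_mul_cancel₀ hN.ne']
    have hdp : dist (p - s • outNormal A p) p = s := by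
      rw [dist_eq_norm]
      have : p - s • outNormal A p - p = -(s • outNormal A p) := by abel
      rw [this, norm_neg, norm_smul, hnorm, Real.norm_eq_abs, abs_of_nonneg hs0, mul_one]
    apply le_antisymm
    · calc Metric.infDist (p - s • outNormal A p) {x : EuclideanSpace ℝ (Fin 2) | qA A x = k}
          ≤ dist (p - s • outNormal A p) p := Metric.infDist_le_dist_of_mem hp
        _ = s := hdp
    · rw [Metric.infDist_eq_iInf]
      have : Nonempty {x : EuclideanSpace ℝ (Fin 2) | qA A x = k} := ⟨⟨p, hp⟩⟩
      apply le_ciInf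
      rintro ⟨x, hx⟩
      have h := (key_ge A hA l1 l2 hl1 hl12 htr hdet k p x hp hx s hs0 hsl).1
      rw [dist_comm, dist_eq_norm]
      exact h
  refine ⟨hdist, ?_⟩
  intro p p' hp hp' s s' hsI hsI' heq
  have hss' : s = s' := by
    have h1 := hdist p hp s hsI.1 hsI.2
    have h2 := hdist p' hp' s' hsI'.1 hsI'.2
    rw [heq] at h1
    rw [h1] at h2
    exact h2
  have hpp' : p = p' := by
    by_contra hne
    have hsl := hbound p hp s hsI.1 hsI.2
    have h := (key_ge A hA l1 l2 hl1 hl12 htr hdet k p p' hp hp' s hsI.1 hsl).2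
      (fun h => hne h.symm)
    -- but ‖p' - (p - s • outNormal A p)‖ = ‖p' - (p' - s' • outNormal A p')‖ = s' = s
    have hsl' := hbound p' hp' s' hsI'.1 hsI'.2
    have hN' : 0 < ‖mulPt A p'‖ := lt_of_le_of_lt (mul_nonneg hsI'.1 hl2.le) hsl'
    have hnorm' : ‖outNormal A p'‖ = 1 := by
      rw [outNormal, norm_smul, norm_inv, norm_norm, inv_mul_cancel₀ hN'.ne']
    have heval : ‖p' - (p - s • outNormal A p)‖ = s' := by
      rw [heq]
      have : p' - (p' - s' • outNormal A p') = s' • outNormal A p' := by abel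
      rw [this, norm_smul, hnorm', Real.norm_eq_abs, abs_of_nonneg hsI'.1, mul_one]
    rw [heval, ← hss'] at h
    exact lt_irrefl s h
  exact ⟨hpp', hss'⟩
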